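/- Let s be a nonnegative integer and suppose a₁+a₂+a₃ = 0 (reduced case). The coefficient of λ^{2s-1} in the characteristic polynomial det(λI - H_s) = λ^{2s+1} + b₁λ^{2s} + b₂λ^{2s-1} + ... satisfies b₁ = 0 and b₂ = -(g₂/120)·s(s+1)(2s-1)(2s+1)(2s+3), where g₂ = -4(a₁a₂ + a₂a₃ + a₁a₃). -/

import Mathlib

open Polynomial Finset

/-- Closed form for sums of quartic polynomials over `range n`. -/
lemma sum_quartic (n : ℕ) (c0 c1 c2 c3 c4 : ℝ) :
    ∑ i ∈ Finset.range n, (c0 + c1*(i:ℝ) + c2*(i:ℝ)^2 + c3*(i:ℝ)^3 + c4*(i:ℝ)^4)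
      = c0*(n:ℝ) + c1*((n:ℝ)*((n:ℝ)-1)/2) + c2*((n:ℝ)*((n:ℝ)-1)*(2*(n:ℝ)-1)/6)
        + c3*((n:ℝ)^2*((n:ℝ)-1)^2/4)
        + c4*((n:ℝ)*((n:ℝ)-1)*(2*(n:ℝ)-1)*(3*(n:ℝ)^2-3*(n:ℝ)-1)/30) := by
  induction n with
  | zero => simp
  | succ n ih =>
    rw [Finset.sum_range_succ, ih]
    push_cast
    ring

lemma prodXC_coeff_card {ι : Type*} [DecidableEq ι] (t : Finset ι) (f : ι → ℝ) :
    (∏ i ∈ t, (X - C (f i))).coeff t.card = 1 := by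
  have h2 : (∏ i ∈ t, (X - C (f i))).natDegree = t.card := by
    rw [Polynomial.natDegree_prod_of_monic _ _ fun i _ => monic_X_sub_C (f i)]
    simp
  have h1 : (∏ i ∈ t, (X - C (f i))).Monic :=
    monic_prod_of_monic _ _ fun i _ => monic_X_sub_C (f i)
  rw [← h2]
  exact h1.coeff_natDegree

lemma prodXC_coeff_one {ι : Type*} [DecidableEq ι] (f : ι → ℝ) (t : Finset ι) :
    ∀ k : ℕ, t.card = k + 1 →
      (∏ i ∈ t, (X - C (f i))).coeff k = -∑ i ∈ t, f i := by
  induction t using Finset.induction_on with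
  | empty => intro k hk; simp at hk
  | @insert a t ha ih =>
    intro k hk
    rw [Finset.card_insert_of_notMem ha] at hk
    have htk : t.card = k := by omega
    rw [Finset.prod_insert ha, Finset.sum_insert ha, sub_mul, coeff_sub, coeff_C_mul]
    cases k with
    | zero =>
      obtain rfl : t = ∅ := Finset.card_eq_zero.mp htk
      simp
    | succ m =>
      have h1 : (∏ i ∈ t, (X - C (f i))).coeff (m+1) = 1 := by
        have := prodXC_coeff_card t f
        rwa [htk] at this
      rw [coeff_X_mul, ih m htk, h1]
      ring

lemma prodXC_coeff_two {ι : Type*} [DecidableEq ι] (f : ι → ℝ) (t : Finset ι) :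
    ∀ k : ℕ, t.card = k + 2 →
      (∏ i ∈ t, (X - C (f i))).coeff k
        = ((∑ i ∈ t, f i)^2 - ∑ i ∈ t, (f i)^2)/2 := by
  induction t using Finset.induction_on with
  | empty => intro k hk; simp at hk
  | @insert a t ha ih =>
    intro k hk
    rw [Finset.card_insert_of_notMem ha] at hk
    have htk : t.card = k + 1 := by omega
    rw [Finset.prod_insert ha, Finset.sum_insert ha, Finset.sum_insert ha, sub_mul, coeff_sub,
      coeff_C_mul, prodXC_coeff_one f t k htk]
    cases k with
    | zero =>
      obtain ⟨b, rfl⟩ := Finset.card_eq_one.mp htk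
      simp only [Finset.prod_singleton, Finset.sum_singleton, mul_coeff_zero, coeff_X_zero,
        zero_mul]
      ring
    | succ m =>
      rw [coeff_X_mul, ih m (by omega)]
      ring

/-- Sum over `Fin n` of an indicator supported at value `m`. -/
lemma fin_sum_ite (n m : ℕ) (c : ℝ) :
    ∑ k : Fin n, (if (k:ℕ) = m then c else 0) = if m < n then c else 0 := by
  rw [Fin.sum_univ_eq_sum_range (fun k => if k = m then c else 0) n,
    Finset.sum_ite_eq' (Finset.range n) m (fun _ => c)]
  simp

lemma my_conj_mul {n : ℕ} (V M N : Matrix (Fin n) (Fin n) ℝ) (hV : star V * V = 1) :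
    (V*M*star V) * (V*N*star V) = V*(M*N)*star V := by
  simp only [Matrix.mul_assoc]
  rw [← Matrix.mul_assoc (star V) V (N * star V), hV, Matrix.one_mul]

lemma my_conj_trace {n : ℕ} (V M : Matrix (Fin n) (Fin n) ℝ) (hV : star V * V = 1) :
    (V * M * star V).trace = M.trace := by
  rw [Matrix.trace_mul_comm (V * M) (star V), ← Matrix.mul_assoc, hV, Matrix.one_mul]

lemma charpoly_conj {n : ℕ} (V M : Matrix (Fin n) (Fin n) ℝ) (hV : V * star V = 1) :
    (V * M * star V).charpoly = M.charpoly := by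
  have key : Matrix.charmatrix (V*M*star V)
      = (C : ℝ →+* ℝ[X]).mapMatrix V * Matrix.charmatrix M
        * (C : ℝ →+* ℝ[X]).mapMatrix (star V) := by
    unfold Matrix.charmatrix
    rw [Matrix.mul_sub, Matrix.sub_mul]
    congr 1
    · have hc : Matrix.scalar (Fin n) (X:ℝ[X]) * (C : ℝ →+* ℝ[X]).mapMatrix V
          = (C : ℝ →+* ℝ[X]).mapMatrix V * Matrix.scalar (Fin n) (X:ℝ[X]) :=
        Matrix.scalar_commute (X:ℝ[X]) (fun r => Commute.all _ r) _
      rw [← hc, Matrix.mul_assoc, ← map_mul, hV, map_one, Matrix.mul_one]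
    · rw [← map_mul, ← map_mul]
  have hone : (C : ℝ →+* ℝ[X]).mapMatrix V * (C : ℝ →+* ℝ[X]).mapMatrix (star V) = 1 := by
    rw [← map_mul, hV, map_one]
  show (Matrix.charmatrix _).det = (Matrix.charmatrix M).det
  rw [key, Matrix.det_mul, Matrix.det_mul, mul_right_comm, ← Matrix.det_mul, hone,
    Matrix.det_one, one_mul]

lemma charpoly_diag {n : ℕ} (d : Fin n → ℝ) :
    (Matrix.diagonal d).charpoly = ∏ i, (X - C (d i)) := by
  unfold Matrix.charpoly
  have hc : Matrix.charmatrix (Matrix.diagonal d)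
      = Matrix.diagonal (fun i => (X : ℝ[X]) - C (d i)) := by
    ext i j
    by_cases h : i = j
    · subst h; simp
    · rw [Matrix.charmatrix_apply_ne _ _ _ h, Matrix.diagonal_apply_ne _ h,
        Matrix.diagonal_apply_ne _ h, map_zero, neg_zero]
  rw [hc, Matrix.det_diagonal]

lemma herm_facts {n : ℕ} (A : Matrix (Fin n) (Fin n) ℝ) (hA : A.IsHermitian) :
    A.charpoly = ∏ i, (X - C (hA.eigenvalues i)) ∧
    A.trace = ∑ i, hA.eigenvalues i ∧
    (A * A).trace = ∑ i, hA.eigenvalues i ^ 2 := by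
  have hsp := hA.spectral_theorem
  have hfun : (RCLike.ofReal ∘ hA.eigenvalues : Fin n → ℝ) = hA.eigenvalues := by
    rw [RCLike.ofReal_real_eq_id, Function.id_comp]
  rw [hfun, Unitary.conjStarAlgAut_apply] at hsp
  have hV1 : (hA.eigenvectorUnitary : Matrix (Fin n) (Fin n) ℝ)
      * star (hA.eigenvectorUnitary : Matrix (Fin n) (Fin n) ℝ) = 1 :=
    (Matrix.mem_unitaryGroup_iff).mp hA.eigenvectorUnitary.2
  have hV2 : star (hA.eigenvectorUnitary : Matrix (Fin n) (Fin n) ℝ)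
      * (hA.eigenvectorUnitary : Matrix (Fin n) (Fin n) ℝ) = 1 := mul_eq_one_comm.mp hV1
  refine ⟨?_, ?_, ?_⟩
  · conv_lhs => rw [hsp]
    rw [charpoly_conj _ _ hV1, charpoly_diag]
  · conv_lhs => rw [hsp]
    rw [my_conj_trace _ _ hV2, Matrix.trace_diagonal]
  · conv_lhs => rw [hsp]
    rw [my_conj_mul _ _ _ hV2, Matrix.diagonal_mul_diagonal, my_conj_trace _ _ hV2,
      Matrix.trace_diagonal]
    exact Finset.sum_congr rfl fun i _ => (sq (hA.eigenvalues i)).symm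

/-- Quantum Euler top matrix in the spin-`s` representation:
indices `i : Fin (2*s+1)` correspond to `j = i - s ∈ {-s,...,s}`. -/
noncomputable def Hmat (s : ℕ) (a1 a2 a3 : ℝ) :
    Matrix (Fin (2 * s + 1)) (Fin (2 * s + 1)) ℝ :=
  Matrix.of fun i i' =>
    let j : ℝ := (i : ℕ) - (s : ℝ)
    let j' : ℝ := (i' : ℕ) - (s : ℝ)
    if i = i' then (a1 + a2) / 2 * ((s : ℝ) * ((s : ℝ) + 1) - j ^ 2) + a3 * j ^ 2
    else if (i' : ℕ) = (i : ℕ) + 2 then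
      (a1 - a2) / 4 *
        Real.sqrt (((s : ℝ) - j) * ((s : ℝ) - j - 1) * ((s : ℝ) + j + 1) * ((s : ℝ) + j + 2))
    else if (i : ℕ) = (i' : ℕ) + 2 then
      (a1 - a2) / 4 *
        Real.sqrt (((s : ℝ) - j') * ((s : ℝ) - j' - 1) * ((s : ℝ) + j' + 1) * ((s : ℝ) + j' + 2))
    else 0

/-- diagonal entry as a function of the index. -/
noncomputable def dent (s : ℕ) (a1 a2 a3 : ℝ) (m : ℕ) : ℝ :=
  (a1 + a2) / 2 * ((s:ℝ) * ((s:ℝ)+1) - ((m:ℝ) - (s:ℝ))^2) + a3 * ((m:ℝ)-(s:ℝ))^2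

/-- off-diagonal entry `(m, m+2)` as a function of the index. -/
noncomputable def cent (s : ℕ) (a1 a2 : ℝ) (m : ℕ) : ℝ :=
  (a1 - a2)/4 * Real.sqrt (((s:ℝ) - ((m:ℝ)-(s:ℝ))) * ((s:ℝ) - ((m:ℝ)-(s:ℝ)) - 1)
    * ((s:ℝ) + ((m:ℝ)-(s:ℝ)) + 1) * ((s:ℝ) + ((m:ℝ)-(s:ℝ)) + 2))

lemma Hmat_apply (s : ℕ) (a1 a2 a3 : ℝ) (i k : Fin (2*s+1)) :
    Hmat s a1 a2 a3 i k =
      if (k:ℕ) = (i:ℕ) then dent s a1 a2 a3 (i:ℕ)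
      else if (k:ℕ) = (i:ℕ)+2 then cent s a1 a2 (i:ℕ)
      else if (i:ℕ) = (k:ℕ)+2 then cent s a1 a2 (k:ℕ) else 0 := by
  unfold Hmat dent cent
  rw [Matrix.of_apply]
  dsimp only
  by_cases h1 : i = k
  · subst h1
    rw [if_pos rfl, if_pos rfl]
  · rw [if_neg h1, if_neg (show ¬ (k:ℕ) = (i:ℕ) from fun h => h1 (Fin.ext h.symm))]

lemma Hmat_herm (s : ℕ) (a1 a2 a3 : ℝ) : (Hmat s a1 a2 a3).IsHermitian := by
  rw [Matrix.IsHermitian]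
  ext i k
  rw [Matrix.conjTranspose_apply, Hmat_apply, Hmat_apply, star_trivial]
  split_ifs with h1 h2 h3 h4 h5 h6 h7 h8 h9 <;> first | rfl | omega | (rw [h1])

theorem charpoly_coeffs_reduced (s : ℕ) (a1 a2 a3 : ℝ) (h : a1 + a2 + a3 = 0) :
    (Hmat s a1 a2 a3).charpoly.coeff (2 * s) = 0 ∧
    (Hmat s a1 a2 a3).charpoly.coeff (2 * s - 1) =
      -((-4 * (a1 * a2 + a2 * a3 + a1 * a3)) / 120) * (s : ℝ) * ((s : ℝ) + 1) *
        (2 * (s : ℝ) - 1) * (2 * (s : ℝ) + 1) * (2 * (s : ℝ) + 3) := by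
  have ha3 : a3 = -a1 - a2 := by linarith
  have hA := Hmat_herm s a1 a2 a3
  obtain ⟨hcp, htr, htr2⟩ := herm_facts (Hmat s a1 a2 a3) hA
  have hdent : ∀ m : ℕ, dent s a1 a2 a3 m
      = ((a1+a2)/2*((s:ℝ) - 2*(s:ℝ)^2)) + (3*(a1+a2)*(s:ℝ))*(m:ℝ)
        + (-(3*(a1+a2)/2))*(m:ℝ)^2 + 0*(m:ℝ)^3 + 0*(m:ℝ)^4 := by
    intro m; unfold dent; rw [ha3]; ring
  have hT : (Hmat s a1 a2 a3).trace = 0 := by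
    unfold Matrix.trace
    have h1 : ∀ i : Fin (2*s+1), (Hmat s a1 a2 a3).diag i = dent s a1 a2 a3 (i:ℕ) := by
      intro i
      rw [Matrix.diag_apply, Hmat_apply, if_pos rfl]
    rw [Finset.sum_congr rfl fun i _ => h1 i,
      Fin.sum_univ_eq_sum_range (fun m => dent s a1 a2 a3 m) (2*s+1),
      Finset.sum_congr rfl fun m _ => hdent m, sum_quartic]
    push_cast
    ring
  have hsum0 : ∑ i, hA.eigenvalues i = 0 := htr.symm.trans hT
  have hcard1 : (Finset.univ : Finset (Fin (2*s+1))).card = 2*s + 1 := by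
    rw [Finset.card_univ, Fintype.card_fin]
  refine ⟨?_, ?_⟩
  · rw [hcp, prodXC_coeff_one hA.eigenvalues Finset.univ (2*s) hcard1, hsum0, neg_zero]
  · rcases Nat.eq_zero_or_pos s with hs | hs
    · subst hs
      rw [show 2*0-1 = 0 from rfl, hcp,
        prodXC_coeff_one hA.eigenvalues Finset.univ 0 hcard1, hsum0, neg_zero]
      norm_num
    · -- pointwise product formula
      have hpt : ∀ i k : Fin (2*s+1), Hmat s a1 a2 a3 i k * Hmat s a1 a2 a3 k i
          = (if (k:ℕ) = (i:ℕ) then dent s a1 a2 a3 (i:ℕ) ^ 2 else 0)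
            + (if (k:ℕ) = (i:ℕ)+2 then cent s a1 a2 (i:ℕ) ^ 2 else 0)
            + (if (i:ℕ) = (k:ℕ)+2 then cent s a1 a2 (k:ℕ) ^ 2 else 0) := by
        intro i k
        rw [Hmat_apply, Hmat_apply]
        by_cases h1 : k = i
        · subst h1
          have e2 : ¬((k:ℕ) = (k:ℕ) + 2) := by omega
          have e3 : ¬((k:ℕ) + 2 = (k:ℕ)) := by omega
          simp only [if_pos (rfl : (k:ℕ) = (k:ℕ)), if_neg e2, if_neg e3, if_true]
          ring
        · have h1' : ¬((k:ℕ) = (i:ℕ)) := fun hh => h1 (Fin.ext hh)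
          have h1'' : ¬((i:ℕ) = (k:ℕ)) := fun hh => h1 (Fin.ext hh.symm)
          by_cases h2 : (k:ℕ) = (i:ℕ) + 2
          · have h3 : ¬((i:ℕ) = (k:ℕ) + 2) := by omega
            simp only [if_neg h1', if_neg h1'', if_pos h2, if_neg h3]
            ring
          · by_cases h3 : (i:ℕ) = (k:ℕ) + 2
            · simp only [if_neg h1', if_neg h1'', if_neg h2, if_pos h3]
              ring
            · simp only [if_neg h1', if_neg h1'', if_neg h2, if_neg h3]
              ring
      have hdent2 : ∀ m : ℕ, dent s a1 a2 a3 m ^ 2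
          = ((a1+a2)^2/4*((s:ℝ)^2-4*(s:ℝ)^3+4*(s:ℝ)^4))
            + ((a1+a2)^2/4*(12*(s:ℝ)^2-24*(s:ℝ)^3))*(m:ℝ)
            + ((a1+a2)^2/4*(-6*(s:ℝ)+48*(s:ℝ)^2))*(m:ℝ)^2
            + ((a1+a2)^2/4*(-36*(s:ℝ)))*(m:ℝ)^3
            + ((a1+a2)^2/4*9)*(m:ℝ)^4 := by
        intro m; unfold dent; rw [ha3]; ring
      have hcent : ∀ m ∈ Finset.range (2*s-1), cent s a1 a2 m ^ 2
          = (((a1-a2)/4)^2*(8*(s:ℝ)^2-4*(s:ℝ)))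
            + (((a1-a2)/4)^2*(12*(s:ℝ)^2-14*(s:ℝ)+2))*(m:ℝ)
            + (((a1-a2)/4)^2*(4*(s:ℝ)^2-14*(s:ℝ)+5))*(m:ℝ)^2
            + (((a1-a2)/4)^2*(4-4*(s:ℝ)))*(m:ℝ)^3
            + (((a1-a2)/4)^2*1)*(m:ℝ)^4 := by
        intro m hm
        rw [Finset.mem_range] at hm
        have hm2 : (m:ℝ) + 2 ≤ 2*(s:ℝ) := by
          have h' : m + 2 ≤ 2*s := by omega
          exact_mod_cast h'
        have h0 : (0:ℝ) ≤ (m:ℝ) := Nat.cast_nonneg m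
        have q1 : (0:ℝ) ≤ (s:ℝ) - ((m:ℝ)-(s:ℝ)) := by linarith
        have q2 : (0:ℝ) ≤ (s:ℝ) - ((m:ℝ)-(s:ℝ)) - 1 := by linarith
        have q3 : (0:ℝ) ≤ (s:ℝ) + ((m:ℝ)-(s:ℝ)) + 1 := by linarith
        have q4 : (0:ℝ) ≤ (s:ℝ) + ((m:ℝ)-(s:ℝ)) + 2 := by linarith
        unfold cent
        rw [mul_pow, Real.sq_sqrt (mul_nonneg (mul_nonneg (mul_nonneg q1 q2) q3) q4)]
        ring
      have hT2 : (Hmat s a1 a2 a3 * Hmat s a1 a2 a3).trace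
          = (a1^2 + a1*a2 + a2^2)/15
            * ((s:ℝ)*((s:ℝ)+1)*(2*(s:ℝ)-1)*(2*(s:ℝ)+1)*(2*(s:ℝ)+3)) := by
        have hdiag : ∀ i : Fin (2*s+1), (Hmat s a1 a2 a3 * Hmat s a1 a2 a3).diag i
            = dent s a1 a2 a3 (i:ℕ) ^ 2
              + (if (i:ℕ)+2 < 2*s+1 then cent s a1 a2 (i:ℕ) ^ 2 else 0)
              + (∑ k : Fin (2*s+1), if (i:ℕ) = (k:ℕ)+2 then cent s a1 a2 (k:ℕ) ^ 2 else 0) := by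
          intro i
          rw [Matrix.diag_apply, Matrix.mul_apply,
            Finset.sum_congr rfl fun k _ => hpt i k, Finset.sum_add_distrib,
            Finset.sum_add_distrib,
            fin_sum_ite (2*s+1) (i:ℕ) (dent s a1 a2 a3 (i:ℕ) ^ 2),
            fin_sum_ite (2*s+1) ((i:ℕ)+2) (cent s a1 a2 (i:ℕ) ^ 2),
            if_pos i.isLt]
        unfold Matrix.trace
        rw [Finset.sum_congr rfl fun i _ => hdiag i, Finset.sum_add_distrib,
          Finset.sum_add_distrib, Finset.sum_comm,
          Finset.sum_congr rfl fun (k : Fin (2*s+1)) _ =>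
            fin_sum_ite (2*s+1) ((k:ℕ)+2) (cent s a1 a2 (k:ℕ) ^ 2),
          Fin.sum_univ_eq_sum_range (fun m => dent s a1 a2 a3 m ^ 2) (2*s+1),
          Fin.sum_univ_eq_sum_range
            (fun m => if m+2 < 2*s+1 then cent s a1 a2 m ^ 2 else 0) (2*s+1)]
        have hsub : ∑ m ∈ Finset.range (2*s+1), (if m+2 < 2*s+1 then cent s a1 a2 m ^ 2 else 0)
            = ∑ m ∈ Finset.range (2*s-1), cent s a1 a2 m ^ 2 := by
          rw [← Finset.sum_subset (Finset.range_subset_range.mpr (by omega : 2*s-1 ≤ 2*s+1))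
            (fun x _ hnx => by
              rw [Finset.mem_range, not_lt] at hnx
              exact if_neg (by omega))]
          exact Finset.sum_congr rfl fun m hm => by
            rw [Finset.mem_range] at hm
            rw [if_pos (by omega)]
        rw [hsub, Finset.sum_congr rfl fun m _ => hdent2 m, sum_quartic,
          Finset.sum_congr rfl hcent, sum_quartic, Nat.cast_sub (by omega : 1 ≤ 2*s)]
        push_cast
        ring
      have hsum2 : ∑ i, hA.eigenvalues i ^ 2
          = (a1^2 + a1*a2 + a2^2)/15
            * ((s:ℝ)*((s:ℝ)+1)*(2*(s:ℝ)-1)*(2*(s:ℝ)+1)*(2*(s:ℝ)+3)) :=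
        htr2.symm.trans hT2
      have hcard2 : (Finset.univ : Finset (Fin (2*s+1))).card = (2*s-1) + 2 := by
        rw [Finset.card_univ, Fintype.card_fin]
        omega
      rw [hcp, prodXC_coeff_two hA.eigenvalues Finset.univ (2*s-1) hcard2, hsum0, hsum2, ha3]
      ring
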